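/- For every W ∈ Matrix (Fin n) (Fin n) ℝ and all indices i, j, the (i,j) entry of the tropical transfer matrix dominates the weight of the uppermost path: T(W)_{i,j} ≥ ψ(W)_{i,j} in ℝ ∪ {−∞} (coercing the real number ψ(W)_{i,j} into ℝ ∪ {−∞}). -/

import Mathlib

open Finset

/-- Truncated predecessor in `Fin n` (1-indexed entry `i-1`). -/
def fpred {n : ℕ} (j : Fin n) : Fin n :=
  ⟨j.val - 1, Nat.lt_of_le_of_lt (Nat.sub_le _ _) j.isLt⟩

/-- `ψ(W)_{i,j}` is the tropical weight of the uppermost path from source `i`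
to target `j` in the canonical planar network `G_n`. -/
def psi (n : ℕ) (W : Matrix (Fin n) (Fin n) ℝ) : Matrix (Fin n) (Fin n) ℝ :=
  fun i j => if i ≤ j then ∑ t ∈ Finset.Icc i j, W i t else ∑ t ∈ Finset.Icc j i, W t j

/-- The map `φ`, inverse of `ψ`. -/
def phi (n : ℕ) (A : Matrix (Fin n) (Fin n) ℝ) : Matrix (Fin n) (Fin n) ℝ :=
  fun i j =>
    if i = j then A i j
    else if i < j then A i j - A i (fpred j)
    else A i j - A (fpred i) j

/-- Weak trapeze inequalities. -/
def WeakTrapeze (n : ℕ) (W : Matrix (Fin n) (Fin n) ℝ) : Prop :=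
  ∀ i : Fin n, 0 < i.val →
    W i (fpred i) + W (fpred i) (fpred i) + W (fpred i) i ≤ W i i

/-- Strict trapeze inequalities. -/
def StrictTrapeze (n : ℕ) (W : Matrix (Fin n) (Fin n) ℝ) : Prop :=
  ∀ i : Fin n, 0 < i.val →
    W i (fpred i) + W (fpred i) (fpred i) + W (fpred i) i < W i i

/-- Weak parallelogram inequalities. -/
def WeakPara (n : ℕ) (W : Matrix (Fin n) (Fin n) ℝ) : Prop :=
  ∀ i j : Fin n, ∀ _h : j.val + 2 ≤ i.val,
    W i j ≤ W i ⟨j.val + 1, by have := i.isLt; omega⟩ ∧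
    W j i ≤ W ⟨j.val + 1, by have := i.isLt; omega⟩ i

/-- Strict parallelogram inequalities. -/
def StrictPara (n : ℕ) (W : Matrix (Fin n) (Fin n) ℝ) : Prop :=
  ∀ i j : Fin n, ∀ _h : j.val + 2 ≤ i.val,
    W i j < W i ⟨j.val + 1, by have := i.isLt; omega⟩ ∧
    W j i < W ⟨j.val + 1, by have := i.isLt; omega⟩ i

/-- Maximum, over the permutations of sign `ε`, of the tropical weight of the
permutation in the `k × k` matrix `B` (computed in `WithBot ℝ`, the maximum over
the empty set being `⊥ = -∞`). -/
def tropPermSup (k : ℕ) (ε : ℤˣ) (B : Matrix (Fin k) (Fin k) (WithBot ℝ)) : WithBot ℝ :=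
  (Finset.univ.filter fun σ : Equiv.Perm (Fin k) => Equiv.Perm.sign σ = ε).sup
    fun σ => ∑ i, B i (σ i)

/-- Tropical total nonnegativity of a matrix over `ℝ ∪ {-∞}`. -/
def IsTropTN (n : ℕ) (A : Matrix (Fin n) (Fin n) (WithBot ℝ)) : Prop :=
  ∀ (k : ℕ) (r c : Fin k → Fin n), StrictMono r → StrictMono c →
    tropPermSup k (-1) (A.submatrix r c) ≤ tropPermSup k 1 (A.submatrix r c)

/-- Tropical total positivity of a real matrix. -/
def IsTropTP (n : ℕ) (A : Matrix (Fin n) (Fin n) ℝ) : Prop :=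
  ∀ (k : ℕ), 2 ≤ k → ∀ (r c : Fin k → Fin n), StrictMono r → StrictMono c →
    tropPermSup k (-1) ((A.map ((↑) : ℝ → WithBot ℝ)).submatrix r c) <
      tropPermSup k 1 ((A.map ((↑) : ℝ → WithBot ℝ)).submatrix r c)

/-- Max-plus matrix product. -/
def tropMul {l m p : ℕ} (A : Matrix (Fin l) (Fin m) (WithBot ℝ))
    (B : Matrix (Fin m) (Fin p) (WithBot ℝ)) : Matrix (Fin l) (Fin p) (WithBot ℝ) :=
  fun i j => Finset.univ.sup fun k => A i k + B k j

/-- Tropical identity matrix. -/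
def tropId (n : ℕ) : Matrix (Fin n) (Fin n) (WithBot ℝ) :=
  fun i j => if i = j then 0 else ⊥

/-- Tropical elementary Jacobi matrix `x_i(s)` (0-indexed: `s` in position `(i, i+1)`). -/
def xUp (n : ℕ) (i : ℕ) (s : ℝ) : Matrix (Fin n) (Fin n) (WithBot ℝ) :=
  fun a b => if a = b then 0 else if a.val = i ∧ b.val = i + 1 then (s : WithBot ℝ) else ⊥

/-- Tropical elementary Jacobi matrix `x̄_i(s)` (0-indexed: `s` in position `(i+1, i)`). -/
def xLow (n : ℕ) (i : ℕ) (s : ℝ) : Matrix (Fin n) (Fin n) (WithBot ℝ) :=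
  fun a b => if a = b then 0 else if a.val = i + 1 ∧ b.val = i then (s : WithBot ℝ) else ⊥

/-- Tropical elementary Jacobi matrix `x∘_i(s)` (0-indexed diagonal matrix,
`s` in position `(i, i)`). -/
def xDiag (n : ℕ) (i : ℕ) (s : ℝ) : Matrix (Fin n) (Fin n) (WithBot ℝ) :=
  fun a b => if a = b then (if a.val = i then (s : WithBot ℝ) else 0) else ⊥

/-- Entry of `W` looked up with natural-number (0-based) indices. -/
def wnat (n : ℕ) (W : Matrix (Fin n) (Fin n) ℝ) (a b : ℕ) : ℝ :=
  if h : a < n ∧ b < n then W ⟨a, h.1⟩ ⟨b, h.2⟩ else 0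

/-- The left part `L(W)` of the canonical planar network:
`L(W) = ⊙_{k=1}^{n−1} ⊙_{t=1}^{k} x̄_{n−k+t−1}(W_{n−k+t, t})` (1-indexed). -/
def Lmat (n : ℕ) (W : Matrix (Fin n) (Fin n) ℝ) : Matrix (Fin n) (Fin n) (WithBot ℝ) :=
  ((List.range (n - 1)).flatMap fun k => (List.range (k + 1)).map fun t =>
      xLow n (n - k + t - 2) (wnat n W (n - k + t - 1) t)).foldl tropMul (tropId n)

/-- The diagonal part `D(W) = x∘_1(W_{1,1}) ⊙ ⋯ ⊙ x∘_n(W_{n,n})` (1-indexed). -/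
def Dmat (n : ℕ) (W : Matrix (Fin n) (Fin n) ℝ) : Matrix (Fin n) (Fin n) (WithBot ℝ) :=
  ((List.range n).map fun i => xDiag n i (wnat n W i i)).foldl tropMul (tropId n)

/-- The tropical transfer matrix of the canonical totally connected planar
network `G_n` with weight matrix `W`: `T(W) = L(W) ⊙ D(W) ⊙ (L(Wᵀ))ᵀ`. -/
def Tmat (n : ℕ) (W : Matrix (Fin n) (Fin n) ℝ) : Matrix (Fin n) (Fin n) (WithBot ℝ) :=
  tropMul (tropMul (Lmat n W) (Dmat n W)) (Matrix.transpose (Lmat n W.transpose))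

section TropAux

variable {n : ℕ}

/-- Reachability through a list of tropical factors: from column `a` one can get to
column `b` collecting weight `d`, stepping through (or skipping, when the diagonal
entry is nonnegative) each factor in order. -/
inductive TReach (n : ℕ) :
    List (Matrix (Fin n) (Fin n) (WithBot ℝ)) → Fin n → Fin n → WithBot ℝ → Prop
  | nil (a : Fin n) : TReach n [] a a 0
  | skip {M l a b d} (h : 0 ≤ M a a) (hr : TReach n l a b d) : TReach n (M :: l) a b d
  | step {M l a a' b d} (d' : WithBot ℝ) (h : d' ≤ M a a') (hr : TReach n l a' b d) :
      TReach n (M :: l) a b (d' + d)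

lemma TReach.congr {l a b} {d d' : WithBot ℝ} (h : TReach n l a b d) (e : d = d') :
    TReach n l a b d' := e ▸ h

lemma TReach.refl (l : List (Matrix (Fin n) (Fin n) (WithBot ℝ))) (a : Fin n)
    (h : ∀ M ∈ l, 0 ≤ M a a) : TReach n l a a 0 := by
  induction l with
  | nil => exact TReach.nil a
  | cons M l ih =>
      exact TReach.skip (h M (List.mem_cons_self)) (ih fun M hM => h M (List.mem_cons_of_mem _ hM))

lemma TReach.append {l1 l2 : List (Matrix (Fin n) (Fin n) (WithBot ℝ))} {a b c d1 d2}
    (h1 : TReach n l1 a b d1) (h2 : TReach n l2 b c d2) :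
    TReach n (l1 ++ l2) a c (d1 + d2) := by
  induction h1 with
  | nil a => exact h2.congr (zero_add d2).symm
  | skip h hr ih => exact TReach.skip h (ih h2)
  | step d' h hr ih => exact (TReach.step d' h (ih h2)).congr (add_assoc _ _ _).symm

lemma tropMul_ge {A B : Matrix (Fin n) (Fin n) (WithBot ℝ)} {i k j : Fin n} :
    A i k + B k j ≤ tropMul A B i j := by
  have := Finset.le_sup (f := fun k => A i k + B k j) (Finset.mem_univ k)
  simpa [tropMul] using this

lemma TReach.foldl_ge {l a b d} (h : TReach n l a b d) :
    ∀ (P : Matrix (Fin n) (Fin n) (WithBot ℝ)) (i : Fin n) (c : WithBot ℝ), c ≤ P i a →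
      c + d ≤ (l.foldl tropMul P) i b := by
  induction h with
  | nil a =>
      intro P i c hc
      simpa using hc
  | skip h hr ih =>
      intro P i c hc
      refine ih _ i c ?_
      calc c = c + 0 := (add_zero c).symm
        _ ≤ P i _ + _ := add_le_add hc h
        _ ≤ _ := tropMul_ge
  | step d' h hr ih =>
      intro P i c hc
      rw [← add_assoc]
      refine ih _ i (c + d') ?_
      calc c + d' ≤ P i _ + _ := add_le_add hc h
        _ ≤ _ := tropMul_ge

lemma TReach.one : ∀ (l : List (Matrix (Fin n) (Fin n) (WithBot ℝ))) (p : ℕ)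
    (hp : p < l.length) (a b : Fin n) (c : WithBot ℝ),
    (∀ q (hq : q < l.length), q < p → 0 ≤ (l.get ⟨q, hq⟩) a a) →
    (∀ q (hq : q < l.length), p < q → 0 ≤ (l.get ⟨q, hq⟩) b b) →
    c ≤ (l.get ⟨p, hp⟩) a b → TReach n l a b c := by
  intro l
  induction l with
  | nil => intro p hp; simp at hp
  | cons M l ih =>
      intro p hp a b c h1 h2 hstep
      cases p with
      | zero =>
          refine (TReach.step c hstep (TReach.refl l b ?_)).congr (add_zero c)
          intro N hN
          obtain ⟨q, rfl⟩ := List.get_of_mem hN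
          exact h2 (q.val + 1) (by simp) (Nat.succ_pos q.val)
      | succ p =>
          refine TReach.skip (h1 0 (Nat.succ_pos _) (Nat.succ_pos p)) ?_
          exact ih p (Nat.lt_of_succ_lt_succ hp) a b c
            (fun q hq hqp => h1 (q + 1) (Nat.succ_lt_succ hq) (Nat.succ_lt_succ hqp))
            (fun q hq hqp => h2 (q + 1) (Nat.succ_lt_succ hq) (Nat.succ_lt_succ hqp))
            hstep

lemma TReach.entry_le {l : List (Matrix (Fin n) (Fin n) (WithBot ℝ))} {a b d}
    (h : TReach n l a b d) : d ≤ (l.foldl tropMul (tropId n)) a b := by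
  have := h.foldl_ge (tropId n) a 0 (by simp [tropId])
  simpa using this

end TropAux

/-- The `k`-th block of factors of `Lmat`. -/
def Lblock (n : ℕ) (W : Matrix (Fin n) (Fin n) ℝ) (k : ℕ) :
    List (Matrix (Fin n) (Fin n) (WithBot ℝ)) :=
  (List.range (k + 1)).map fun t => xLow n (n - k + t - 2) (wnat n W (n - k + t - 1) t)

lemma Lmat_eq (n : ℕ) (W : Matrix (Fin n) (Fin n) ℝ) :
    Lmat n W = ((List.range (n - 1)).flatMap (Lblock n W)).foldl tropMul (tropId n) := rfl

lemma Lsuffix {n : ℕ} (W : Matrix (Fin n) (Fin n) ℝ) :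
    ∀ (m : ℕ) (i j : Fin n), j.val + m = i.val →
      TReach n ((List.range' (n - 1 - m) m).flatMap (Lblock n W)) i j
        ((∑ t ∈ Finset.Ioc j i, W t j : ℝ) : WithBot ℝ) := by
  intro m
  induction m with
  | zero =>
      intro i j h
      obtain rfl : j = i := Fin.ext (by omega)
      simpa using TReach.nil (n := n) j
  | succ m ih =>
      intro i j h
      have hin : i.val < n := i.isLt
      have hn : m + 2 ≤ n := by omega
      set i' : Fin n := ⟨j.val + m, by omega⟩ with hi'def
      have hi'v : i'.val = j.val + m := rfl
      rw [List.range'_succ, show n - 1 - (m + 1) + 1 = n - 1 - m from by omega,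
        List.flatMap_cons]
      have hfirst : TReach n (Lblock n W (n - 1 - (m + 1))) i i' ((W i j : ℝ) : WithBot ℝ) := by
        apply TReach.one _ j.val
        · intro q hq hqj
          simp [Lblock, xLow]
        · intro q hq hjq
          simp [Lblock, xLow]
        · simp only [Lblock, List.get_eq_getElem, List.getElem_map, List.getElem_range, xLow]
          have hne : i ≠ i' := by
            intro e
            have : i.val = i'.val := congrArg Fin.val e
            omega
          rw [if_neg hne, if_pos ⟨by omega, by omega⟩]
          simp only [wnat]
          rw [dif_pos ⟨by omega, j.isLt⟩]
          apply le_of_eq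
          have e1 : (⟨n - (n - 1 - (m + 1)) + j.val - 1, by omega⟩ : Fin n) = i :=
            Fin.ext (show n - (n - 1 - (m + 1)) + j.val - 1 = i.val by omega)
          exact (congrArg (fun a : Fin n => ((W a j : ℝ) : WithBot ℝ)) e1).symm
        · simp only [Lblock, List.length_map, List.length_range]
          omega
      have hrest := ih i' j hi'v.symm
      refine (hfirst.append hrest).congr ?_
      have hIoc : Finset.Ioc j i = insert i (Finset.Ioc j i') := by
        ext t
        simp only [Finset.mem_Ioc, Finset.mem_insert, Fin.lt_def, Fin.le_def, Fin.ext_iff]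
        omega
      have hni : i ∉ Finset.Ioc j i' := by
        simp only [Finset.mem_Ioc, Fin.lt_def, Fin.le_def, not_and, not_le]
        intro _
        omega
      rw [hIoc, Finset.sum_insert hni, WithBot.coe_add]

lemma Lbound {n : ℕ} (W : Matrix (Fin n) (Fin n) ℝ) (i j : Fin n) (hji : j ≤ i) :
    ((∑ t ∈ Finset.Ioc j i, W t j : ℝ) : WithBot ℝ) ≤ Lmat n W i j := by
  have hji' : j.val ≤ i.val := hji
  have hm : j.val + (i.val - j.val) = i.val := by omega
  set m := i.val - j.val with hmdef
  have hsuf := Lsuffix W m i j hm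
  have hdec : List.range (n - 1) =
      List.range' 0 (n - 1 - m) ++ List.range' (n - 1 - m) m := by
    rw [List.range_eq_range']
    rw [show n - 1 = m + (n - 1 - m) from by have := i.isLt; omega]
    rw [show m + (n - 1 - m) - m = n - 1 - m from by omega, Nat.add_comm m]
    rw [← List.range'_append (s := 0) (m := n - 1 - m) (n := m) (step := 1)]
    simp
  have hpre : TReach n ((List.range' 0 (n - 1 - m)).flatMap (Lblock n W)) i i 0 := by
    apply TReach.refl
    intro M hM
    simp only [List.mem_flatMap, Lblock, List.mem_map] at hM
    obtain ⟨k, -, t, -, rfl⟩ := hM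
    simp [xLow]
  have := (hpre.append hsuf).congr (zero_add _)
  rw [Lmat_eq, hdec, List.flatMap_append]
  exact this.entry_le

lemma Lmat_diag_nonneg {n : ℕ} (W : Matrix (Fin n) (Fin n) ℝ) (i : Fin n) :
    (0 : WithBot ℝ) ≤ Lmat n W i i := by
  have := Lbound W i i le_rfl
  simpa using this

lemma Dbound {n : ℕ} (W : Matrix (Fin n) (Fin n) ℝ) (j : Fin n) :
    ((W j j : ℝ) : WithBot ℝ) ≤ Dmat n W j j := by
  apply TReach.entry_le
  apply TReach.one _ j.val
  · intro q hq hqj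
    simp only [List.get_eq_getElem, List.getElem_map, List.getElem_range, xDiag]
    simp [show ¬(j.val = q) from by omega]
  · intro q hq hjq
    simp only [List.get_eq_getElem, List.getElem_map, List.getElem_range, xDiag]
    simp [show ¬(j.val = q) from by omega]
  · simp only [List.get_eq_getElem, List.getElem_map, List.getElem_range, xDiag]
    simp [wnat, j.isLt]
  · simp [j.isLt]

/-- each entry of the tropical transfer matrix dominates the
weight of the corresponding uppermost path. -/
theorem transfer_ge_uppermost (n : ℕ) (W : Matrix (Fin n) (Fin n) ℝ)
    (i j : Fin n) :
    ((psi n W i j : ℝ) : WithBot ℝ) ≤ Tmat n W i j := by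
  have hT : Tmat n W i j =
      tropMul (tropMul (Lmat n W) (Dmat n W)) (Matrix.transpose (Lmat n W.transpose)) i j := rfl
  rcases le_or_gt i j with hij | hji
  · -- case i ≤ j
    have h1 : (0 : WithBot ℝ) ≤ Lmat n W i i := Lmat_diag_nonneg W i
    have h2 : ((W i i : ℝ) : WithBot ℝ) ≤ Dmat n W i i := Dbound W i
    have h3 : ((∑ t ∈ Finset.Ioc i j, W i t : ℝ) : WithBot ℝ) ≤ Lmat n W.transpose j i := by
      have := Lbound W.transpose j i hij
      simpa [Matrix.transpose_apply] using this
    have step1 : Lmat n W i i + Dmat n W i i ≤ tropMul (Lmat n W) (Dmat n W) i i := tropMul_ge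
    have step2 : tropMul (Lmat n W) (Dmat n W) i i +
        (Matrix.transpose (Lmat n W.transpose)) i j ≤ Tmat n W i j := by
      rw [hT]; exact tropMul_ge
    have hpsi : psi n W i j = W i i + ∑ t ∈ Finset.Ioc i j, W i t := by
      rw [psi]
      simp only [if_pos hij]
      rw [Finset.Icc_eq_cons_Ioc hij, Finset.sum_cons]
    rw [hpsi]
    rw [WithBot.coe_add]
    calc ((W i i : ℝ) : WithBot ℝ) + ((∑ t ∈ Finset.Ioc i j, W i t : ℝ) : WithBot ℝ)
        = (0 + ((W i i : ℝ) : WithBot ℝ)) + _ := by rw [zero_add]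
      _ ≤ (Lmat n W i i + Dmat n W i i) + Lmat n W.transpose j i :=
          add_le_add (add_le_add h1 h2) h3
      _ ≤ tropMul (Lmat n W) (Dmat n W) i i + (Matrix.transpose (Lmat n W.transpose)) i j :=
          add_le_add_left step1 _
      _ ≤ Tmat n W i j := step2
  · -- case j < i
    have hji' : j ≤ i := le_of_lt hji
    have h1 : ((∑ t ∈ Finset.Ioc j i, W t j : ℝ) : WithBot ℝ) ≤ Lmat n W i j :=
      Lbound W i j hji'
    have h2 : ((W j j : ℝ) : WithBot ℝ) ≤ Dmat n W j j := Dbound W j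
    have h3 : (0 : WithBot ℝ) ≤ Lmat n W.transpose j j := Lmat_diag_nonneg W.transpose j
    have step1 : Lmat n W i j + Dmat n W j j ≤ tropMul (Lmat n W) (Dmat n W) i j := tropMul_ge
    have step2 : tropMul (Lmat n W) (Dmat n W) i j +
        (Matrix.transpose (Lmat n W.transpose)) j j ≤ Tmat n W i j := by
      rw [hT]; exact tropMul_ge
    have hpsi : psi n W i j = W j j + ∑ t ∈ Finset.Ioc j i, W t j := by
      rw [psi]
      simp only [if_neg (not_le.mpr hji)]
      rw [Finset.Icc_eq_cons_Ioc hji', Finset.sum_cons]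
    rw [hpsi]
    rw [WithBot.coe_add]
    calc ((W j j : ℝ) : WithBot ℝ) + ((∑ t ∈ Finset.Ioc j i, W t j : ℝ) : WithBot ℝ)
        = (((∑ t ∈ Finset.Ioc j i, W t j : ℝ) : WithBot ℝ) + ((W j j : ℝ) : WithBot ℝ)) + 0 := by
          rw [add_zero, add_comm]
      _ ≤ (Lmat n W i j + Dmat n W j j) + Lmat n W.transpose j j :=
          add_le_add (add_le_add h1 h2) h3
      _ ≤ tropMul (Lmat n W) (Dmat n W) i j + (Matrix.transpose (Lmat n W.transpose)) j j :=
          add_le_add_left step1 _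
      _ ≤ Tmat n W i j := step2
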